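/- The SDMMSA estimator is nondecreasing in the index: μ̂_1 ≤ μ̂_2 ≤ … ≤ μ̂_k. More precisely, μ̂ is constant on each block [i_u, i_{u−1}−1] of the SDMMSA partition, and the common block values strictly increase from later blocks to earlier ones: for u > u', Ȳ_{i_u, i_{u−1}−1} < Ȳ_{i_{u'}, i_{u'−1}−1}. -/
import Mathlib


open Finset

noncomputable section SDMMSA

/-- Pooled weight `n_{i,j} = ∑_{h=i}^j n_h`. -/
def pooledWeight (n : ℕ → ℝ) (i j : ℕ) : ℝ := ∑ h ∈ Finset.Icc i j, n h

/-- Pooled (weighted) mean `Ȳ_{i,j} = (∑_{h=i}^j n_h Y_h) / n_{i,j}`. -/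
def pooledMean (n Y : ℕ → ℝ) (i j : ℕ) : ℝ :=
  (∑ h ∈ Finset.Icc i j, n h * Y h) / pooledWeight n i j

/-- The first SDMMSA index for the data `(Y_1,n_1),…,(Y_t,n_t)`:
the smallest `j ∈ [1,t]` at which `Ȳ_{j,t} = max_{1 ≤ j' ≤ t} Ȳ_{j',t}`. -/
def firstIdx (n Y : ℕ → ℝ) (t : ℕ) : ℕ :=
  sInf {j | 1 ≤ j ∧ j ≤ t ∧ ∀ j', 1 ≤ j' → j' ≤ t → pooledMean n Y j' t ≤ pooledMean n Y j t}

/-- Fuel-based recursion implementing the SDMMSA step-down procedure: on data range `[1,t]`,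
every `i ≥ i₁ = firstIdx n Y t` gets the pooled mean `Ȳ_{i₁,t}` of the top block, and for
`i < i₁` we recurse on the data range `[1, i₁ - 1]`.  A fuel of `t` suffices since the
range shrinks strictly at each step. -/
def sdmmsaAux (n Y : ℕ → ℝ) : ℕ → ℕ → ℕ → ℝ
  | 0, _, _ => 0
  | fuel + 1, t, i =>
      if firstIdx n Y t ≤ i then pooledMean n Y (firstIdx n Y t) t
      else sdmmsaAux n Y fuel (firstIdx n Y t - 1) i

/-- `muhat n Y k i` is the SDMMSA estimate `μ̂_i` computed from the data
`(Y_1,n_1),…,(Y_k,n_k)`. -/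
def muhat (n Y : ℕ → ℝ) (k i : ℕ) : ℝ := sdmmsaAux n Y k k i

/-- The SDMMSA indices `i_u` computed from the data `(Y_1,n_1),…,(Y_k,n_k)`:
`sdIdx n Y k 0 = i_0 = k+1` and `i_{u+1}` is the first SDMMSA index of `[1, i_u - 1]`. -/
def sdIdx (n Y : ℕ → ℝ) (k : ℕ) : ℕ → ℕ
  | 0 => k + 1
  | u + 1 => firstIdx n Y (sdIdx n Y k u - 1)

/-- The number of steps `h` of the SDMMSA: the first `u` with `i_u = 1`. -/
def sdSteps (n Y : ℕ → ℝ) (k : ℕ) : ℕ := sInf {u | sdIdx n Y k u = 1}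

end SDMMSA

namespace SD0

variable (n Y : ℕ → ℝ) (k : ℕ)

lemma firstIdx_spec (t : ℕ) (ht : 1 ≤ t) :
    1 ≤ firstIdx n Y t ∧ firstIdx n Y t ≤ t ∧
      ∀ j', 1 ≤ j' → j' ≤ t → pooledMean n Y j' t ≤ pooledMean n Y (firstIdx n Y t) t := by
  have hne : {j | 1 ≤ j ∧ j ≤ t ∧ ∀ j', 1 ≤ j' → j' ≤ t →
      pooledMean n Y j' t ≤ pooledMean n Y j t}.Nonempty := by
    obtain ⟨b, hb, hmax⟩ := Finset.exists_max_image (Finset.Icc 1 t)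
      (fun j => pooledMean n Y j t) ⟨1, by simp [ht]⟩
    simp only [Finset.mem_Icc] at hb
    exact ⟨b, hb.1, hb.2, fun j' h1 h2 => hmax j' (Finset.mem_Icc.2 ⟨h1, h2⟩)⟩
  exact Nat.sInf_mem hne

lemma firstIdx_lt_strict (t j : ℕ) (ht : 1 ≤ t) (hj : 1 ≤ j) (hlt : j < firstIdx n Y t) :
    pooledMean n Y j t < pooledMean n Y (firstIdx n Y t) t := by
  obtain ⟨h1, h2, h3⟩ := firstIdx_spec n Y t ht
  have hjt : j ≤ t := le_trans hlt.le h2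
  have hle := h3 j hj hjt
  rcases lt_or_eq_of_le hle with h | h
  · exact h
  · exfalso
    have : j ∉ {j | 1 ≤ j ∧ j ≤ t ∧ ∀ j', 1 ≤ j' → j' ≤ t →
        pooledMean n Y j' t ≤ pooledMean n Y j t} := Nat.notMem_of_lt_sInf hlt
    exact this ⟨hj, hjt, fun j' hj1 hj2 => h ▸ h3 j' hj1 hj2⟩

lemma sum_Icc_split (f : ℕ → ℝ) (a b c : ℕ) (h1 : a ≤ b) (h2 : b ≤ c) :
    ∑ x ∈ Finset.Icc (a + 1) c, f x =
      ∑ x ∈ Finset.Icc (a + 1) b, f x + ∑ x ∈ Finset.Icc (b + 1) c, f x := by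
  rw [Finset.Icc_add_one_left_eq_Ioc, Finset.Icc_add_one_left_eq_Ioc, Finset.Icc_add_one_left_eq_Ioc]
  exact (Finset.sum_Ioc_consecutive f h1 h2).symm

lemma pooledWeight_pos (hn : ∀ h, 1 ≤ h → h ≤ k → 0 < n h) (j t : ℕ)
    (hj : 1 ≤ j) (hjt : j ≤ t) (htk : t ≤ k) : 0 < pooledWeight n j t :=
  Finset.sum_pos (fun i hi => by
    simp only [Finset.mem_Icc] at hi
    exact hn i (le_trans hj hi.1) (le_trans hi.2 htk))
    ⟨j, Finset.mem_Icc.2 ⟨le_rfl, hjt⟩⟩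

lemma block_lt (hn : ∀ h, 1 ≤ h → h ≤ k → 0 < n h) (t j : ℕ)
    (ht : 1 ≤ t) (htk : t ≤ k) (hj : 1 ≤ j) (hlt : j < firstIdx n Y t) :
    pooledMean n Y j (firstIdx n Y t - 1) < pooledMean n Y (firstIdx n Y t) t := by
  obtain ⟨hi1, hi2, _⟩ := firstIdx_spec n Y t ht
  set i := firstIdx n Y t with hidef
  have hji : j ≤ i - 1 := by omega
  set A := ∑ x ∈ Finset.Icc j (i - 1), n x * Y x with hA
  set B := ∑ x ∈ Finset.Icc i t, n x * Y x with hB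
  set a := pooledWeight n j (i - 1) with ha
  set b := pooledWeight n i t with hb
  have hapos : 0 < a := pooledWeight_pos n k hn j (i - 1) hj hji (by omega)
  have hbpos : 0 < b := pooledWeight_pos n k hn i t hi1 hi2 htk
  have hsplit1 : pooledWeight n j t = a + b := by
    have := sum_Icc_split (fun x => n x) (j - 1) (i - 1) t (by omega) (by omega)
    rw [ha, hb, pooledWeight, pooledWeight, pooledWeight]
    have e1 : j - 1 + 1 = j := by omega
    have e2 : i - 1 + 1 = i := by omega
    rw [e1, e2] at this
    exact this
  have hsplit2 : ∑ x ∈ Finset.Icc j t, n x * Y x = A + B := by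
    have := sum_Icc_split (fun x => n x * Y x) (j - 1) (i - 1) t (by omega) (by omega)
    have e1 : j - 1 + 1 = j := by omega
    have e2 : i - 1 + 1 = i := by omega
    rw [e1, e2] at this
    exact this
  have hstrict : pooledMean n Y j t < pooledMean n Y i t :=
    firstIdx_lt_strict n Y t j ht hj hlt
  rw [pooledMean, pooledMean, hsplit1, hsplit2, ← hB, ← hb] at hstrict
  rw [pooledMean, pooledMean, ← hA, ← hB, ← ha, ← hb]
  rw [div_lt_div_iff₀ (by linarith) hbpos] at hstrict
  rw [div_lt_div_iff₀ hapos hbpos]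
  nlinarith

end SD0

namespace SD0

variable (n Y : ℕ → ℝ) (k : ℕ)

lemma exists_steps (hk : 1 ≤ k) : ∃ u, sdIdx n Y k u = 1 := by
  by_contra hcon
  push_neg at hcon
  have P : ∀ u, 1 ≤ sdIdx n Y k u ∧ sdIdx n Y k u + u ≤ k + 1 := by
    intro u
    induction u with
    | zero => simp [sdIdx]
    | succ v ih =>
      have h2 : 2 ≤ sdIdx n Y k v := by
        have := hcon v; omega
      have ht : 1 ≤ sdIdx n Y k v - 1 := by omega
      obtain ⟨g1, g2, _⟩ := firstIdx_spec n Y (sdIdx n Y k v - 1) ht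
      have : sdIdx n Y k (v + 1) = firstIdx n Y (sdIdx n Y k v - 1) := rfl
      omega
  have := P (k + 1)
  omega

lemma sdSteps_one (hk : 1 ≤ k) : sdIdx n Y k (sdSteps n Y k) = 1 :=
  Nat.sInf_mem (exists_steps n Y k hk)

lemma ne_one_of_lt (u : ℕ) (hu : u < sdSteps n Y k) : sdIdx n Y k u ≠ 1 := by
  have h : u ∉ {u | sdIdx n Y k u = 1} := Nat.notMem_of_lt_sInf hu
  simpa using h

lemma chainP (hk : 1 ≤ k) : ∀ u, u ≤ sdSteps n Y k →
    1 ≤ sdIdx n Y k u ∧ sdIdx n Y k u + u ≤ k + 1 := by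
  intro u
  induction u with
  | zero => intro _; simp [sdIdx]
  | succ v ih =>
    intro h
    have hv := ih (by omega)
    have h2 : 2 ≤ sdIdx n Y k v := by
      have := ne_one_of_lt n Y k v (by omega); omega
    have ht : 1 ≤ sdIdx n Y k v - 1 := by omega
    obtain ⟨g1, g2, _⟩ := firstIdx_spec n Y (sdIdx n Y k v - 1) ht
    have : sdIdx n Y k (v + 1) = firstIdx n Y (sdIdx n Y k v - 1) := rfl
    omega

lemma two_le (hk : 1 ≤ k) (u : ℕ) (hu : u < sdSteps n Y k) : 2 ≤ sdIdx n Y k u := by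
  have := chainP n Y k hk u hu.le
  have := ne_one_of_lt n Y k u hu
  omega

lemma step_le (hk : 1 ≤ k) (u : ℕ) (hu : u < sdSteps n Y k) :
    1 ≤ sdIdx n Y k (u + 1) ∧ sdIdx n Y k (u + 1) ≤ sdIdx n Y k u - 1 := by
  have h2 := two_le n Y k hk u hu
  obtain ⟨g1, g2, _⟩ := firstIdx_spec n Y (sdIdx n Y k u - 1) (by omega)
  exact ⟨g1, g2⟩

lemma sdIdx_anti (hk : 1 ≤ k) : ∀ a b, a ≤ b → b ≤ sdSteps n Y k →
    sdIdx n Y k b ≤ sdIdx n Y k a := by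
  intro a b hab
  induction b with
  | zero =>
    intro _
    have : a = 0 := by omega
    subst this; exact le_rfl
  | succ v ih =>
    intro hb
    rcases Nat.lt_or_ge a (v + 1) with h | h
    · have h1 := ih (by omega) (by omega)
      have h2 := step_le n Y k hk v (by omega)
      omega
    · have : a = v + 1 := by omega
      subst this; exact le_rfl

lemma steps_le_k (hk : 1 ≤ k) : sdSteps n Y k ≤ k := by
  have h1 := chainP n Y k hk (sdSteps n Y k) le_rfl
  have h2 := sdSteps_one n Y k hk
  omega

end SD0

namespace SD0

variable (n Y : ℕ → ℝ) (k : ℕ)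

lemma aux_block (hk : 1 ≤ k) : ∀ d v fuel, v + d + 1 ≤ sdSteps n Y k → d < fuel →
    ∀ i, sdIdx n Y k (v + d + 1) ≤ i → i ≤ sdIdx n Y k (v + d) - 1 →
    sdmmsaAux n Y fuel (sdIdx n Y k v - 1) i =
      pooledMean n Y (sdIdx n Y k (v + d + 1)) (sdIdx n Y k (v + d) - 1) := by
  intro d
  induction d with
  | zero =>
    intro v fuel hvd hf i hi1 hi2
    obtain ⟨f, rfl⟩ : ∃ f, fuel = f + 1 := ⟨fuel - 1, by omega⟩
    have hfi : firstIdx n Y (sdIdx n Y k v - 1) = sdIdx n Y k (v + 1) := rfl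
    simp only [Nat.add_zero] at hvd hi1 hi2 ⊢
    rw [sdmmsaAux, hfi, if_pos hi1]
  | succ d ih =>
    intro v fuel hvd hf i hi1 hi2
    obtain ⟨f, rfl⟩ : ∃ f, fuel = f + 1 := ⟨fuel - 1, by omega⟩
    have hfi : firstIdx n Y (sdIdx n Y k v - 1) = sdIdx n Y k (v + 1) := rfl
    have hlt : i < sdIdx n Y k (v + 1) := by
      have hm : sdIdx n Y k (v + d + 1) ≤ sdIdx n Y k (v + 1) :=
        sdIdx_anti n Y k hk (v + 1) (v + d + 1) (by omega) (by omega)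
      have h2 : 2 ≤ sdIdx n Y k (v + d + 1) := two_le n Y k hk (v + d + 1) (by omega)
      have e : v + (d + 1) = v + d + 1 := by omega
      rw [e] at hi2
      omega
    rw [sdmmsaAux, hfi, if_neg (by omega)]
    have := ih (v + 1) f (by omega) (by omega) i
      (by rw [show v + 1 + d + 1 = v + (d + 1) + 1 by omega]; exact hi1)
      (by rw [show v + 1 + d = v + (d + 1) by omega]; exact hi2)
    rw [this, show v + 1 + d + 1 = v + (d + 1) + 1 by omega,
      show v + 1 + d = v + (d + 1) by omega]

lemma muhat_block (hk : 1 ≤ k) (u : ℕ) (hu1 : 1 ≤ u) (hu2 : u ≤ sdSteps n Y k)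
    (i : ℕ) (hi1 : sdIdx n Y k u ≤ i) (hi2 : i ≤ sdIdx n Y k (u - 1) - 1) :
    muhat n Y k i = pooledMean n Y (sdIdx n Y k u) (sdIdx n Y k (u - 1) - 1) := by
  have hsk := steps_le_k n Y k hk
  have e1 : 0 + (u - 1) + 1 = u := by omega
  have e2 : 0 + (u - 1) = u - 1 := by omega
  have := aux_block n Y k hk (u - 1) 0 k (by omega) (by omega) i
    (by rw [e1]; exact hi1) (by rw [e2]; exact hi2)
  rw [e1, e2] at this
  have hk0 : sdIdx n Y k 0 - 1 = k := by simp [sdIdx]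
  rw [hk0] at this
  rw [muhat]
  exact this

lemma block_step (hk : 1 ≤ k) (hn : ∀ h, 1 ≤ h → h ≤ k → 0 < n h)
    (u : ℕ) (hu1 : 1 ≤ u) (hu2 : u + 1 ≤ sdSteps n Y k) :
    pooledMean n Y (sdIdx n Y k (u + 1)) (sdIdx n Y k u - 1) <
      pooledMean n Y (sdIdx n Y k u) (sdIdx n Y k (u - 1) - 1) := by
  set t := sdIdx n Y k (u - 1) - 1 with htdef
  have hfi : firstIdx n Y t = sdIdx n Y k u := by
    rw [htdef, show u = (u - 1) + 1 by omega]; rfl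
  have h2' : 2 ≤ sdIdx n Y k (u - 1) := two_le n Y k hk (u - 1) (by omega)
  have h2u : 2 ≤ sdIdx n Y k u := two_le n Y k hk u (by omega)
  have htk : t ≤ k := by
    have := chainP n Y k hk (u - 1) (by omega); omega
  have hj1 : 1 ≤ sdIdx n Y k (u + 1) := (chainP n Y k hk (u + 1) hu2).1
  have hjlt : sdIdx n Y k (u + 1) < sdIdx n Y k u := by
    have := step_le n Y k hk u (by omega); omega
  have := block_lt n Y k hn t (sdIdx n Y k (u + 1)) (by omega) htk hj1 (by rw [hfi]; exact hjlt)
  rw [hfi] at this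
  exact this

lemma block_strict (hk : 1 ≤ k) (hn : ∀ h, 1 ≤ h → h ≤ k → 0 < n h) :
    ∀ u u', 1 ≤ u' → u' < u → u ≤ sdSteps n Y k →
    pooledMean n Y (sdIdx n Y k u) (sdIdx n Y k (u - 1) - 1) <
      pooledMean n Y (sdIdx n Y k u') (sdIdx n Y k (u' - 1) - 1) := by
  intro u u' hu'1 hlt
  induction u with
  | zero => omega
  | succ v ih =>
    intro hu
    rcases Nat.lt_or_ge u' v with h | h
    · have h1 := ih (by omega) (by omega)
      have h2 : pooledMean n Y (sdIdx n Y k (v + 1)) (sdIdx n Y k (v + 1 - 1) - 1) <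
          pooledMean n Y (sdIdx n Y k v) (sdIdx n Y k (v - 1) - 1) := by
        have := block_step n Y k hk hn v (by omega) (by omega)
        simpa using this
      exact lt_trans h2 h1
    · have : u' = v := by omega
      subst this
      have := block_step n Y k hk hn u' (by omega) (by omega)
      simpa using this

lemma block_of (hk : 1 ≤ k) (i : ℕ) (hi1 : 1 ≤ i) (hi2 : i ≤ k) :
    ∃ u, 1 ≤ u ∧ u ≤ sdSteps n Y k ∧ sdIdx n Y k u ≤ i ∧ i ≤ sdIdx n Y k (u - 1) - 1 := by
  have hne : {u | sdIdx n Y k u ≤ i}.Nonempty :=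
    ⟨sdSteps n Y k, by simp only [Set.mem_setOf_eq, sdSteps_one n Y k hk]; omega⟩
  set u := sInf {u | sdIdx n Y k u ≤ i} with hu
  have hmem : sdIdx n Y k u ≤ i := Nat.sInf_mem hne
  have hule : u ≤ sdSteps n Y k := Nat.sInf_le (by
    simp only [Set.mem_setOf_eq, sdSteps_one n Y k hk]; omega)
  have hu1 : 1 ≤ u := by
    rcases Nat.eq_zero_or_pos u with h | h
    · rw [h] at hmem; simp [sdIdx] at hmem; omega
    · exact h
  have hnot : ¬ sdIdx n Y k (u - 1) ≤ i := by
    have : u - 1 ∉ {u | sdIdx n Y k u ≤ i} := Nat.notMem_of_lt_sInf (by omega)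
    simpa using this
  exact ⟨u, hu1, hule, hmem, by omega⟩

end SD0

/-- Remark 1: the SDMMSA estimator is nondecreasing in the index; it is
constant on each block `[i_u, i_{u-1} - 1]` of the SDMMSA partition, equal there to the
pooled mean `Ȳ_{i_u, i_{u-1}-1}`, and the block values strictly increase from later
blocks to earlier ones. -/
theorem sdmmsa_estimator_monotone (k : ℕ) (hk : 1 ≤ k) (n Y : ℕ → ℝ)
    (hn : ∀ h, 1 ≤ h → h ≤ k → 0 < n h) :
    (∀ i i', 1 ≤ i → i ≤ i' → i' ≤ k → muhat n Y k i ≤ muhat n Y k i') ∧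
    (∀ u, 1 ≤ u → u ≤ sdSteps n Y k →
      ∀ i, sdIdx n Y k u ≤ i → i ≤ sdIdx n Y k (u - 1) - 1 →
        muhat n Y k i = pooledMean n Y (sdIdx n Y k u) (sdIdx n Y k (u - 1) - 1)) ∧
    (∀ u u', 1 ≤ u' → u' < u → u ≤ sdSteps n Y k →
      pooledMean n Y (sdIdx n Y k u) (sdIdx n Y k (u - 1) - 1) <
        pooledMean n Y (sdIdx n Y k u') (sdIdx n Y k (u' - 1) - 1)) := by
  refine ⟨?_, ?_, ?_⟩
  · intro i i' hi1 hii' hi'k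
    obtain ⟨u, hu1, hu2, hb1, hb2⟩ := SD0.block_of n Y k hk i hi1 (le_trans hii' hi'k)
    obtain ⟨u', hu'1, hu'2, hb1', hb2'⟩ := SD0.block_of n Y k hk i' (by omega) hi'k
    have hmi := SD0.muhat_block n Y k hk u hu1 hu2 i hb1 hb2
    have hmi' := SD0.muhat_block n Y k hk u' hu'1 hu'2 i' hb1' hb2'
    have huu' : u' ≤ u := by
      by_contra hcon
      push_neg at hcon
      have h1 : sdIdx n Y k (u' - 1) ≤ sdIdx n Y k u :=
        SD0.sdIdx_anti n Y k hk u (u' - 1) (by omega) (by omega)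
      have h2 := SD0.chainP n Y k hk (u' - 1) (by omega)
      omega
    rcases Nat.eq_or_lt_of_le huu' with h | h
    · rw [hmi, hmi', h]
    · exact le_of_lt (hmi ▸ hmi' ▸ SD0.block_strict n Y k hk hn u u' hu'1 h hu2)
  · intro u hu1 hu2 i hi1 hi2
    exact SD0.muhat_block n Y k hk u hu1 hu2 i hi1 hi2
  · intro u u' hu'1 hlt hu
    exact SD0.block_strict n Y k hk hn u u' hu'1 hlt hu
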